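/- For the Chaplygin sleigh on a horizontal plane (U = 0), with defining vector field v on ℝ⁵ and energy E = ½(m v₁² + (I+ma²) ω²), the scaling vector field u = v₁ ∂/∂v₁ + ω ∂/∂ω satisfies [u, v] = v everywhere on ℝ⁵, and ⟨u, ∇E⟩ = 2E everywhere. -/
import Mathlib


/-- The Chaplygin sleigh on a horizontal plane (`U = 0`): the system on ℝ⁵, coordinates
`p = (v₁, ω, x, y, φ)`, parameters `m, I, a > 0`:
`m v̇₁ = m a ω²`, `(I+ma²) ω̇ = −m a ω v₁`, `ẋ = v₁ cos φ`, `ẏ = v₁ sin φ`, `φ̇ = ω`. -/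
noncomputable def sleigh (m I a : ℝ) (p : Fin 5 → ℝ) : Fin 5 → ℝ :=
  ![a * (p 1) ^ 2,
    -(m * a * (p 1) * (p 0)) / (I + m * a ^ 2),
    (p 0) * Real.cos (p 4),
    (p 0) * Real.sin (p 4),
    p 1]

/-- The energy of the Chaplygin sleigh on a horizontal plane:
`E = ½(m v₁² + (I+ma²) ω²)`. -/
noncomputable def sleighE (m I a : ℝ) (p : Fin 5 → ℝ) : ℝ :=
  (1 / 2) * (m * (p 0) ^ 2 + (I + m * a ^ 2) * (p 1) ^ 2)

/-- For the Chaplygin sleigh on a horizontal plane, the scaling vector field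
`u = v₁ ∂/∂v₁ + ω ∂/∂ω` satisfies `[u, v] = v` everywhere on ℝ⁵, and `⟨u, ∇E⟩ = 2E`. -/
theorem sleigh_scaling_symmetry
    (m I a : ℝ) (hm : 0 < m) (hI : 0 < I) (ha : 0 < a) :
    (∀ p : Fin 5 → ℝ,
      VectorField.lieBracket ℝ (fun q => ![q 0, q 1, 0, 0, 0]) (sleigh m I a) p
        = sleigh m I a p) ∧
    (∀ p : Fin 5 → ℝ,
      fderiv ℝ (sleighE m I a) p ![p 0, p 1, 0, 0, 0] = 2 * sleighE m I a p) := by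
  set pr : Fin 5 → (Fin 5 → ℝ) →L[ℝ] ℝ := fun i => ContinuousLinearMap.proj i with hpr
  constructor
  · intro p
    have h1 : HasFDerivAt (fun q : Fin 5 → ℝ => q 1) (pr 1) p := hasFDerivAt_apply 1 p
    have h0 : HasFDerivAt (fun q : Fin 5 → ℝ => q 0) (pr 0) p := hasFDerivAt_apply 0 p
    have h4 : HasFDerivAt (fun q : Fin 5 → ℝ => q 4) (pr 4) p := hasFDerivAt_apply 4 p
    have hc0 : HasFDerivAt (fun x : Fin 5 → ℝ => a * x 1 ^ 2) ((a * (2 * p 1)) • pr 1) p := by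
      have e : (fun x : Fin 5 → ℝ => a * x 1 ^ 2) = fun x => a * (x 1 * x 1) := by
        funext q; ring
      rw [e]
      exact ((h1.mul h1).const_mul a).congr_fderiv (by ext q; simp; ring)
    have hc1 : HasFDerivAt (fun x : Fin 5 → ℝ => -(m * a * x 1 * x 0) / (I + m * a ^ 2))
        ((-(m * a * p 1) / (I + m * a ^ 2)) • pr 0
          + (-(m * a * p 0) / (I + m * a ^ 2)) • pr 1) p := by
      have e : (fun x : Fin 5 → ℝ => -(m * a * x 1 * x 0) / (I + m * a ^ 2))
          = fun x => (-(m * a) / (I + m * a ^ 2)) * (x 1 * x 0) := by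
        funext q; ring
      rw [e]
      exact ((h1.mul h0).const_mul _).congr_fderiv (by ext q; simp; ring)
    have hc2 : HasFDerivAt (fun x : Fin 5 → ℝ => x 0 * Real.cos (x 4))
        (Real.cos (p 4) • pr 0 + (-(p 0 * Real.sin (p 4))) • pr 4) p :=
      (h0.mul h4.cos).congr_fderiv (by ext q; simp; ring)
    have hc3 : HasFDerivAt (fun x : Fin 5 → ℝ => x 0 * Real.sin (x 4))
        (Real.sin (p 4) • pr 0 + (p 0 * Real.cos (p 4)) • pr 4) p :=
      (h0.mul h4.sin).congr_fderiv (by ext q; simp; ring)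
    have hV : HasFDerivAt (sleigh m I a)
        (ContinuousLinearMap.pi
          ![ (a * (2 * p 1)) • pr 1,
             (-(m * a * p 1) / (I + m * a ^ 2)) • pr 0
               + (-(m * a * p 0) / (I + m * a ^ 2)) • pr 1,
             Real.cos (p 4) • pr 0 + (-(p 0 * Real.sin (p 4))) • pr 4,
             Real.sin (p 4) • pr 0 + (p 0 * Real.cos (p 4)) • pr 4,
             pr 1 ]) p := by
      apply hasFDerivAt_pi''
      intro i
      rw [ContinuousLinearMap.proj_pi]
      fin_cases i
      · exact hc0
      · exact hc1
      · exact hc2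
      · exact hc3
      · exact h1
    have hU : HasFDerivAt (fun q : Fin 5 → ℝ => ![q 0, q 1, 0, 0, 0])
        (ContinuousLinearMap.pi ![pr 0, pr 1, 0, 0, 0]) p := by
      apply hasFDerivAt_pi''
      intro i
      rw [ContinuousLinearMap.proj_pi]
      fin_cases i
      · exact h0
      · exact h1
      · exact hasFDerivAt_const 0 p
      · exact hasFDerivAt_const 0 p
      · exact hasFDerivAt_const 0 p
    rw [VectorField.lieBracket, hV.fderiv, hU.fderiv]
    funext i
    fin_cases i <;>
      simp [sleigh, ContinuousLinearMap.pi_apply, pr] <;> ring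
  · intro p
    have h1 : HasFDerivAt (fun q : Fin 5 → ℝ => q 1) (pr 1) p := hasFDerivAt_apply 1 p
    have h0 : HasFDerivAt (fun q : Fin 5 → ℝ => q 0) (pr 0) p := hasFDerivAt_apply 0 p
    have hE : HasFDerivAt (sleighE m I a)
        ((m * p 0) • pr 0 + ((I + m * a ^ 2) * p 1) • pr 1) p := by
      have e : sleighE m I a
          = fun x : Fin 5 → ℝ => (1/2 * m) * (x 0 * x 0) + (1/2 * (I + m * a ^ 2)) * (x 1 * x 1) := by
        funext q; simp [sleighE]; ring
      rw [e]
      exact (((h0.mul h0).const_mul _).add ((h1.mul h1).const_mul _)).congr_fderiv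
        (by ext q; simp; ring)
    rw [hE.fderiv]
    simp [sleighE, pr]
    ring
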